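/- Every associative Lyndon-Shirshov word u admits a unique bracketing (u) satisfying: (i) every bracketed sub-word corresponds to an ALSW, (ii) if (u) = ((v)(w)) then both (v) and (w) satisfy the conditions, and (iii) if (v) = ((v₁)(v₂)) then v₂ ≤ w lexicographically; moreover this bracketing is given by the standard factorization [u] = [[v][w]] with w the longest ALSW proper suffix of u. -/

import Mathlib

open List

/-- The lexicographic order used by Shirshov: a word is *greater* than any of its
proper extensions (`w > w ++ t` for `t ≠ []`), and otherwise words are compared
letterwise by the order on the alphabet.  `LSLt u v` means `u < v`. -/
def LSLt {X : Type*} [LinearOrder X] : List X → List X → Prop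
  | _ :: _, [] => True
  | [], _ => False
  | a :: u, b :: v => a < b ∨ (a = b ∧ LSLt u v)

/-- `u ≤ v` in the Shirshov lexicographic order. -/
def LSLe {X : Type*} [LinearOrder X] (u v : List X) : Prop := u = v ∨ LSLt u v

/-- The degree-lexicographic order: compare first by length, then lexicographically. -/
def DegLt {X : Type*} [LinearOrder X] (u v : List X) : Prop :=
  u.length < v.length ∨ (u.length = v.length ∧ LSLt u v)

/-- `≤` in the degree-lexicographic order. -/
def DegLe {X : Type*} [LinearOrder X] (u v : List X) : Prop := u = v ∨ DegLt u v

/-- An associative Lyndon–Shirshov word: a nonempty word `u` such that `vw > wv`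
(lexicographically) for every factorization `u = vw` into nonempty parts. -/
def IsALSW {X : Type*} [LinearOrder X] (u : List X) : Prop :=
  u ≠ [] ∧ ∀ v w : List X, v ≠ [] → w ≠ [] → u = v ++ w → LSLt (w ++ v) (v ++ w)

/-- The underlying associative word of a non-associative word (binary bracketing). -/
def wordOf {X : Type*} : FreeMagma X → List X
  | .of x => [x]
  | .mul a b => wordOf a ++ wordOf b

/-- `w` is the longest proper suffix of `u` which is an ALSW. -/
def LongestALSWProperSuffix {X : Type*} [LinearOrder X] (u w : List X) : Prop :=
  IsALSW w ∧ (∃ v : List X, v ≠ [] ∧ u = v ++ w) ∧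
    ∀ w' : List X, IsALSW w' → (∃ v' : List X, v' ≠ [] ∧ u = v' ++ w') →
      w'.length ≤ w.length

/-- The standard (up-to-down) bracketing of an ALSW: `[x] = x` and
`[u] = [[v][w]]` where `w` is the longest proper ALSW suffix of `u`. -/
inductive IsStdBracketing {X : Type*} [LinearOrder X] : List X → FreeMagma X → Prop
  | of (x : X) : IsStdBracketing [x] (.of x)
  | mul {v w : List X} {tv tw : FreeMagma X} :
      IsALSW (v ++ w) → LongestALSWProperSuffix (v ++ w) w →
      IsStdBracketing v tv → IsStdBracketing w tw →
      IsStdBracketing (v ++ w) (tv * tw)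

/-- A non-associative Lyndon–Shirshov word, via Shirshov's conditions:
the underlying word is an ALSW, both halves are NLSWs, and the right factor of
the left half is `≤` the right half. -/
inductive IsNLSW {X : Type*} [LinearOrder X] : FreeMagma X → Prop
  | of (x : X) : IsNLSW (.of x)
  | mul {tv tw : FreeMagma X} :
      IsNLSW tv → IsNLSW tw → IsALSW (wordOf (tv * tw)) →
      (∀ t₁ t₂ : FreeMagma X, tv = t₁ * t₂ → LSLe (wordOf t₂) (wordOf tw)) →
      IsNLSW (tv * tw)

section Machinery
variable {X : Type*} [LinearOrder X]

/-- Strict letterwise lexicographic order: the words differ at a position present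
in both, with the first word smaller there. -/
def SLt : List X → List X → Prop
  | a :: u, b :: v => a < b ∨ (a = b ∧ SLt u v)
  | _, _ => False

theorem slt_nil_left (y : List X) : ¬ SLt [] y := by cases y <;> simp [SLt]

theorem slt_nil_right (x : List X) : ¬ SLt x [] := by cases x <;> simp [SLt]

theorem slt_trans : ∀ {x y z : List X}, SLt x y → SLt y z → SLt x z
  | [], _, _, h1, _ => absurd h1 (slt_nil_left _)
  | _ :: _, [], _, h1, _ => absurd h1 (slt_nil_right _)
  | _ :: _, _ :: _, [], _, h2 => absurd h2 (slt_nil_right _)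
  | a :: x, b :: y, c :: z, h1, h2 => by
    simp only [SLt] at h1 h2 ⊢
    rcases h1 with h1 | ⟨rfl, h1⟩ <;> rcases h2 with h2 | ⟨rfl, h2⟩
    · exact Or.inl (h1.trans h2)
    · exact Or.inl h1
    · exact Or.inl h2
    · exact Or.inr ⟨rfl, slt_trans h1 h2⟩

theorem slt_self_append : ∀ (x t : List X), ¬ SLt x (x ++ t)
  | [], t => slt_nil_left t
  | a :: x, t => by
    simp only [cons_append, SLt, lt_irrefl a, false_or, not_and, true_implies]
    intro h
    exact slt_self_append x t h

theorem slt_irrefl (x : List X) : ¬ SLt x x := by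
  have := slt_self_append x []
  rwa [append_nil] at this

theorem slt_asymm {x y : List X} (h : SLt x y) : ¬ SLt y x :=
  fun h' => slt_irrefl x (slt_trans h h')

theorem slt_append : ∀ {x y : List X}, SLt x y → ∀ (c d : List X), SLt (x ++ c) (y ++ d)
  | [], _, h, _, _ => absurd h (slt_nil_left _)
  | _ :: _, [], h, _, _ => absurd h (slt_nil_right _)
  | a :: x, b :: y, h, c, d => by
    simp only [SLt] at h
    simp only [cons_append, SLt]
    rcases h with h | ⟨rfl, h⟩
    · exact Or.inl h
    · exact Or.inr ⟨rfl, slt_append h c d⟩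

theorem slt_cancel : ∀ (p : List X) {x y : List X}, SLt (p ++ x) (p ++ y) ↔ SLt x y
  | [], x, y => Iff.rfl
  | a :: p, x, y => by
    simp only [cons_append, SLt, lt_irrefl a, false_or, true_and]
    exact slt_cancel p

theorem slt_append_cases : ∀ (x y c d : List X), SLt (x ++ c) (y ++ d) →
    SLt x y ∨ (∃ r, y = x ++ r ∧ SLt c (r ++ d)) ∨ (∃ r, x = y ++ r ∧ SLt (r ++ c) d)
  | [], y, c, d, h => Or.inr (Or.inl ⟨y, rfl, h⟩)
  | a :: x, [], c, d, h => Or.inr (Or.inr ⟨a :: x, rfl, h⟩)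
  | a :: x, b :: y, c, d, h => by
    simp only [cons_append, SLt] at h
    rcases h with h | ⟨rfl, h⟩
    · exact Or.inl (Or.inl h)
    · rcases slt_append_cases x y c d h with h' | ⟨r, rfl, h'⟩ | ⟨r, rfl, h'⟩
      · exact Or.inl (Or.inr ⟨rfl, h'⟩)
      · exact Or.inr (Or.inl ⟨r, rfl, h'⟩)
      · exact Or.inr (Or.inr ⟨r, rfl, h'⟩)

theorem lslt_iff : ∀ (x y : List X), LSLt x y ↔ SLt x y ∨ ∃ r, r ≠ ([] : List X) ∧ x = y ++ r
  | [], y => by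
    constructor
    · intro h; exact absurd h (by cases y <;> simp [LSLt])
    · rintro (h | ⟨r, hr, he⟩)
      · exact absurd h (slt_nil_left _)
      · exact absurd he.symm (append_ne_nil_of_right_ne_nil y hr)
  | a :: x, [] => by
    simp only [LSLt, SLt]
    constructor
    · intro _; exact Or.inr ⟨a :: x, cons_ne_nil a x, rfl⟩
    · intro _; trivial
  | a :: x, b :: y => by
    simp only [LSLt, SLt]
    constructor
    · rintro (h | ⟨rfl, h⟩)
      · exact Or.inl (Or.inl h)
      · rcases (lslt_iff x y).1 h with h' | ⟨r, hr, rfl⟩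
        · exact Or.inl (Or.inr ⟨rfl, h'⟩)
        · exact Or.inr ⟨r, hr, by simp⟩
    · rintro (h | ⟨r, hr, he⟩)
      · rcases h with h | ⟨rfl, h⟩
        · exact Or.inl h
        · exact Or.inr ⟨rfl, (lslt_iff x y).2 (Or.inl h)⟩
      · rw [cons_append] at he
        injection he with h1 h2
        subst h1
        exact Or.inr ⟨rfl, (lslt_iff x y).2 (Or.inr ⟨r, hr, h2⟩)⟩

theorem lslt_of_slt {x y : List X} (h : SLt x y) : LSLt x y := (lslt_iff x y).2 (Or.inl h)

theorem lslt_append_right {x : List X} (r : List X) (hr : r ≠ []) : LSLt (x ++ r) x :=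
  (lslt_iff _ _).2 (Or.inr ⟨r, hr, rfl⟩)

theorem slt_of_lslt_of_le {x y : List X} (h : LSLt x y) (hl : x.length ≤ y.length) : SLt x y := by
  rcases (lslt_iff x y).1 h with h | ⟨r, hr, rfl⟩
  · exact h
  · rw [length_append] at hl
    have : r.length = 0 := by omega
    exact absurd (length_eq_zero_iff.1 this) hr

theorem lslt_irrefl (x : List X) : ¬ LSLt x x := by
  intro h
  rcases (lslt_iff x x).1 h with h | ⟨r, hr, he⟩
  · exact slt_irrefl x h
  · have := congrArg List.length he
    rw [length_append] at this
    exact hr (length_eq_zero_iff.1 (by omega))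

theorem lslt_trans : ∀ {x y z : List X}, LSLt x y → LSLt y z → LSLt x z := by
  intro x y z h1 h2
  rcases (lslt_iff x y).1 h1 with h1 | ⟨r, hr, rfl⟩ <;>
    rcases (lslt_iff y z).1 h2 with h2 | ⟨s, hs, rfl⟩
  · exact lslt_of_slt (slt_trans h1 h2)
  · -- h1 : SLt x (z ++ s)
    have h1' : SLt (x ++ []) (z ++ s) := by rwa [append_nil]
    rcases slt_append_cases x z [] s h1' with h | ⟨q, rfl, h⟩ | ⟨q, rfl, h⟩
    · exact lslt_of_slt h
    · exact absurd h (slt_nil_left _)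
    · rcases eq_or_ne q [] with rfl | hq'
      · rw [append_nil] at h1
        exact absurd h1 (slt_self_append z s)
      · exact lslt_append_right q hq'
  · -- x = y ++ r, h2 : SLt y z
    have := slt_append h2 r []
    rw [append_nil] at this
    exact lslt_of_slt this
  · rw [append_assoc]
    exact lslt_append_right _ (append_ne_nil_of_right_ne_nil s hr)

theorem lslt_asymm {x y : List X} (h : LSLt x y) : ¬ LSLt y x :=
  fun h' => lslt_irrefl x (lslt_trans h h')

theorem lslt_total : ∀ (x y : List X), LSLt x y ∨ x = y ∨ LSLt y x
  | [], [] => Or.inr (Or.inl rfl)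
  | [], b :: y => Or.inr (Or.inr trivial)
  | a :: x, [] => Or.inl trivial
  | a :: x, b :: y => by
    rcases lt_trichotomy a b with h | rfl | h
    · exact Or.inl (Or.inl h)
    · rcases lslt_total x y with h | rfl | h
      · exact Or.inl (Or.inr ⟨rfl, h⟩)
      · exact Or.inr (Or.inl rfl)
      · exact Or.inr (Or.inr (Or.inr ⟨rfl, h⟩))
    · exact Or.inr (Or.inr (Or.inl h))

theorem slt_of_lslt_slt {x y z : List X} (h1 : LSLt x y) (h2 : SLt y z) : SLt x z := by
  rcases (lslt_iff x y).1 h1 with h | ⟨r, hr, rfl⟩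
  · exact slt_trans h h2
  · have := slt_append h2 r ([] : List X)
    rwa [append_nil] at this

theorem lsle_trans {x y z : List X} (h1 : LSLe x y) (h2 : LSLe y z) : LSLe x z := by
  rcases h1 with rfl | h1
  · exact h2
  rcases h2 with rfl | h2
  · exact Or.inr h1
  · exact Or.inr (lslt_trans h1 h2)


end Machinery

section ALSW
variable {X : Type*} [LinearOrder X]

theorem alsw_singleton (x : X) : IsALSW [x] := by
  refine ⟨cons_ne_nil x [], fun v w hv hw he => ?_⟩
  have := congrArg List.length he
  simp only [length_cons, length_nil, length_append] at this
  have hv' : v.length ≠ 0 := fun h => hv (length_eq_zero_iff.1 h)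
  have hw' : w.length ≠ 0 := fun h => hw (length_eq_zero_iff.1 h)
  omega

/-- Claim P: an ALSW is strongly greater than each of its proper nonempty suffixes. -/
theorem alsw_slt_suffix {u : List X} (hu : IsALSW u) :
    ∀ v w : List X, v ≠ [] → w ≠ [] → u = v ++ w → SLt w u := by
  rintro v w hv hw rfl
  have h := hu.2 v w hv hw rfl
  have hlen : (w ++ v).length ≤ (v ++ w).length := by simp [length_append]; omega
  have h' : SLt (w ++ v) (v ++ w) := slt_of_lslt_of_le h hlen
  have h'' : SLt (w ++ v) ((v ++ w) ++ []) := by rwa [append_nil]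
  rcases slt_append_cases w (v ++ w) v [] h'' with h0 | ⟨r, hr, h0⟩ | ⟨r, hr, h0⟩
  · exact h0
  · -- v ++ w = w ++ r
    have hrne : r ≠ [] := by
      rintro rfl
      rw [append_nil] at h0
      exact absurd h0 (slt_nil_right v)
    rw [append_nil] at h0
    -- h0 : SLt v r, hr : v ++ w = w ++ r
    have h2 := hu.2 w r hw hrne hr
    have hlen2 : (r ++ w).length ≤ (w ++ r).length := by simp [length_append]; omega
    have h2' : SLt (r ++ w) (w ++ r) := slt_of_lslt_of_le h2 hlen2
    rw [← hr] at h2'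
    have h3 : SLt (v ++ w) (r ++ w) := slt_append h0 w w
    exact absurd (slt_trans h3 h2') (slt_irrefl _)
  · -- w = (v ++ w) ++ r : length contradiction
    have := congrArg List.length hr
    simp only [length_append] at this
    have hv' : v.length ≠ 0 := fun h => hv (length_eq_zero_iff.1 h)
    omega

/-- Claim Q: conversely, a nonempty word strongly greater than all its proper
nonempty suffixes is an ALSW. -/
theorem alsw_of_slt_suffix {u : List X} (hne : u ≠ [])
    (h : ∀ v w : List X, v ≠ [] → w ≠ [] → u = v ++ w → SLt w u) : IsALSW u := by
  refine ⟨hne, fun v w hv hw he => ?_⟩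
  have h1 : SLt w u := h v w hv hw he
  subst he
  have := slt_append h1 v ([] : List X)
  rw [append_nil] at this
  exact lslt_of_slt this

theorem suffix_suffix {v z p w : List X} (he : v ++ z = p ++ w)
    (hl : z.length ≤ w.length) : ∃ m, w = m ++ z ∧ v = p ++ m := by
  have hp : p <+: v := by
    apply List.prefix_of_prefix_length_le (l₃ := v ++ z)
    · rw [he]; exact List.prefix_append p w
    · exact List.prefix_append v z
    · have := congrArg List.length he
      simp only [length_append] at this
      omega
  obtain ⟨m, rfl⟩ := hp
  rw [append_assoc] at he
  exact ⟨m, (List.append_cancel_left he).symm, rfl⟩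

/-- Claim C: concatenation of ALSWs `a ≻ b` is an ALSW. -/
theorem alsw_append_alsw {a b : List X} (ha : IsALSW a) (hb : IsALSW b)
    (hab : LSLt b a) : IsALSW (a ++ b) := by
  apply alsw_of_slt_suffix (append_ne_nil_of_left_ne_nil ha.1 b)
  rintro p s hp hs he
  rcases le_or_gt s.length b.length with hls | hls
  · -- s is a suffix of b : b = m ++ s, p = a ++ m
    obtain ⟨m, hm, hpm⟩ := suffix_suffix he.symm hls
    rcases eq_or_ne m [] with rfl | hm'
    · -- s = b
      rw [nil_append] at hm
      subst hm
      rcases (lslt_iff b a).1 hab with h | ⟨r, hr, hbr⟩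
      · have := slt_append h ([] : List X) b
        rwa [append_nil] at this
      · conv_lhs => rw [hbr]
        rw [slt_cancel a]
        exact alsw_slt_suffix hb a r ha.1 hr hbr
    · -- s proper nonempty suffix of b
      have hsb : SLt s b := alsw_slt_suffix hb m s hm' hs hm
      rcases (lslt_iff b a).1 hab with h | ⟨r, hr, hbr⟩
      · have h1 : SLt s a := slt_trans hsb h
        have := slt_append h1 ([] : List X) b
        rwa [append_nil] at this
      · rw [hbr] at hsb
        have hsb' : SLt (s ++ []) (a ++ r) := by rwa [append_nil]
        rcases slt_append_cases s a [] r hsb' with h0 | ⟨q, hq, h0⟩ | ⟨q, hq, h0⟩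
        · have := slt_append h0 ([] : List X) b
          rwa [append_nil] at this
        · exact absurd h0 (slt_nil_left _)
        · rw [append_nil] at h0
          have hq' : q ≠ [] := by rintro rfl; exact slt_nil_left r h0
          conv_lhs => rw [hq]
          rw [slt_cancel a]
          exact alsw_slt_suffix hb (m ++ a) q
            (append_ne_nil_of_left_ne_nil hm' a) hq'
            (by rw [hm, hq, append_assoc])
  · -- b proper suffix of s : s = m ++ b, a = p ++ m
    obtain ⟨m, hm, ham⟩ := suffix_suffix he hls.le
    have hm' : m ≠ [] := by
      rintro rfl
      rw [nil_append] at hm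
      subst hm
      exact absurd rfl hls.ne'
    have h1 : SLt m a := alsw_slt_suffix ha p m hp hm' ham
    rw [hm]
    exact slt_append h1 b b

/-- Existence of the longest proper ALSW suffix. -/
theorem longest_exists {u : List X} (hu : IsALSW u) (hl : 2 ≤ u.length) :
    ∃ w, LongestALSWProperSuffix u w := by
  classical
  have hne : ∃ j : ℕ, 1 ≤ j ∧ j < u.length ∧ IsALSW (u.drop j) := by
    rcases List.eq_nil_or_concat u with rfl | ⟨L, b, rfl⟩
    · simp at hl
    · simp only [List.concat_eq_append] at hl ⊢
      refine ⟨L.length, ?_, ?_, ?_⟩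
      · rw [length_append, length_cons, length_nil] at hl; omega
      · simp
      · rw [List.drop_left]
        exact alsw_singleton b
  obtain ⟨hk1, hk2, hk3⟩ := Nat.find_spec hne
  refine ⟨u.drop (Nat.find hne), hk3,
    ⟨u.take (Nat.find hne), ?_, (List.take_append_drop _ u).symm⟩, ?_⟩
  · intro h
    have := congrArg List.length h
    rw [List.length_take, length_nil] at this
    omega
  · rintro w' hw' ⟨v', hv', rfl⟩
    have hwne : w' ≠ [] := hw'.1
    have hj1 : 1 ≤ v'.length := by
      rcases Nat.eq_zero_or_pos v'.length with h | h
      · exact absurd (length_eq_zero_iff.1 h) hv'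
      · exact h
    have hj2 : v'.length < (v' ++ w').length := by
      rw [length_append]
      have : w'.length ≠ 0 := fun h => hwne (length_eq_zero_iff.1 h)
      omega
    have hd : (v' ++ w').drop v'.length = w' := List.drop_left
    have hk : Nat.find hne ≤ v'.length := Nat.find_min' hne ⟨hj1, hj2, by rwa [hd]⟩
    have h1 : ((v' ++ w').drop (Nat.find hne)).length = (v' ++ w').length - Nat.find hne :=
      List.length_drop
    have h2 : (v' ++ w').length = v'.length + w'.length := length_append
    omega

/-- Claim R: every proper nonempty suffix of `u` is `≤` the longest ALSW proper suffix. -/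
theorem suffix_le_longest {u w : List X} (hu : IsALSW u)
    (hw : LongestALSWProperSuffix u w) :
    ∀ z v : List X, v ≠ [] → z ≠ [] → u = v ++ z → LSLe z w := by
  have key : ∀ n : ℕ, ∀ z v : List X, z.length ≤ n → v ≠ [] → z ≠ [] → u = v ++ z →
      LSLe z w := by
    intro n
    induction n with
    | zero =>
      intro z v hzn hv hz he
      exact absurd (length_eq_zero_iff.1 (Nat.le_zero.1 hzn)) hz
    | succ n ih =>
      intro z v hzn hv hz he
      obtain ⟨hwA, ⟨vw, hvw, hevw⟩, hmax⟩ := hw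
      have heq : v ++ z = vw ++ w := by rw [← he, ← hevw]
      rcases lt_trichotomy z.length w.length with hlt | hleq | hgt
      · -- z proper suffix of w
        obtain ⟨m, hm, -⟩ := suffix_suffix heq hlt.le
        have hm' : m ≠ [] := by
          rintro rfl
          rw [nil_append] at hm
          subst hm
          exact absurd rfl hlt.ne
        exact Or.inr (lslt_of_slt (alsw_slt_suffix hwA m z hm' hz hm))
      · -- equal lengths
        obtain ⟨m, hm, -⟩ := suffix_suffix heq hleq.le
        have : m = [] := by
          have := congrArg List.length hm
          rw [length_append] at this
          exact length_eq_zero_iff.1 (by omega)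
        subst this
        rw [nil_append] at hm
        exact Or.inl hm.symm
      · -- z longer than w
        by_contra hcon
        have hzw : z ≠ w := by
          rintro rfl; omega
        have hlt : LSLt w z := by
          rcases lslt_total z w with h | h | h
          · exact absurd (Or.inr h) hcon
          · exact absurd (Or.inl h) hcon
          · exact h
        have hswz : SLt w z := slt_of_lslt_of_le hlt (by omega)
        have hzalsw : IsALSW z := by
          apply alsw_of_slt_suffix hz
          intro p t hp ht hpt
          have htlen : t.length ≤ n := by
            have := congrArg List.length hpt
            rw [length_append] at this
            have hp' : p.length ≠ 0 := fun h => hp (length_eq_zero_iff.1 h)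
            omega
          have hle : LSLe t w := ih t (v ++ p)
            htlen (append_ne_nil_of_left_ne_nil hv p) ht
            (by rw [he, hpt, append_assoc])
          rcases hle with rfl | hle
          · exact hswz
          · rcases (lslt_iff t w).1 hle with h | ⟨r, hr, rfl⟩
            · exact slt_trans h hswz
            · have := slt_append hswz r ([] : List X)
              rwa [append_nil] at this
        have := hmax z hzalsw ⟨v, hv, he⟩
        omega
  intro z v hv hz he
  exact key z.length z v le_rfl hv hz he

/-- Lemma S: the left factor of the standard factorization is an ALSW. -/
theorem left_factor_alsw {u v w : List X} (hu : IsALSW u)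
    (hw : LongestALSWProperSuffix u w) (he : u = v ++ w) (hv : v ≠ []) :
    IsALSW v := by
  apply alsw_of_slt_suffix hv
  intro p s hp hs hps
  have hwne : w ≠ [] := hw.1.1
  have hslen : s.length < v.length := by
    have := congrArg List.length hps
    rw [length_append] at this
    have : p.length ≠ 0 := fun h => hp (length_eq_zero_iff.1 h)
    omega
  have h1 : SLt (s ++ w) u :=
    alsw_slt_suffix hu p (s ++ w) hp (append_ne_nil_of_left_ne_nil hs w)
      (by rw [he, hps, append_assoc])
  rw [he] at h1
  rcases slt_append_cases s v w w h1 with h0 | ⟨r, hr, h0⟩ | ⟨r, hr, h0⟩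
  · exact h0
  · -- v = s ++ r, h0 : SLt w (r ++ w)
    have hrne : r ≠ [] := by
      rintro rfl
      rw [append_nil] at hr
      subst hr
      exact absurd rfl hslen.ne
    have hle : LSLe (r ++ w) w :=
      suffix_le_longest hu hw (r ++ w) s hs
        (append_ne_nil_of_right_ne_nil r hwne) (by rw [he, hr, append_assoc])
    rcases hle with heq2 | hlt2
    · have := congrArg List.length heq2
      rw [length_append] at this
      have : r.length ≠ 0 := fun h => hrne (length_eq_zero_iff.1 h)
      omega
    · exact absurd hlt2 (lslt_asymm (lslt_of_slt h0))
  · -- s = v ++ r : length contradiction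
    have := congrArg List.length hr
    rw [length_append] at this
    omega

end ALSW

section Magma
variable {X : Type*} [LinearOrder X]

theorem wordOf_mul (a b : FreeMagma X) : wordOf (a * b) = wordOf a ++ wordOf b := rfl

theorem wordOf_ne_nil : ∀ t : FreeMagma X, wordOf t ≠ []
  | .of x => cons_ne_nil x []
  | .mul a b => by
    rw [show wordOf (FreeMagma.mul a b) = wordOf a ++ wordOf b from rfl]
    exact append_ne_nil_of_left_ne_nil (wordOf_ne_nil a) _

theorem nlsw_alsw {t : FreeMagma X} (h : IsNLSW t) : IsALSW (wordOf t) := by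
  induction h with
  | of x => exact alsw_singleton x
  | mul h1 h2 h3 h4 => exact h3

theorem std_word {s : List X} {t : FreeMagma X} (h : IsStdBracketing s t) : wordOf t = s := by
  induction h with
  | of x => rfl
  | mul h1 h2 h3 h4 ih1 ih2 => rw [wordOf_mul, ih1, ih2]

theorem std_ne_nil {s : List X} {t : FreeMagma X} (h : IsStdBracketing s t) : s ≠ [] :=
  std_word h ▸ wordOf_ne_nil t

theorem longest_eq {u w w' : List X} (h : LongestALSWProperSuffix u w)
    (h' : LongestALSWProperSuffix u w') : w = w' := by
  obtain ⟨hwA, ⟨v, hv, rfl⟩, hmax⟩ := h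
  obtain ⟨hwA', ⟨v', hv', he'⟩, hmax'⟩ := h'
  have l1 := hmax w' hwA' ⟨v', hv', he'⟩
  have l2 := hmax' w hwA ⟨v, hv, rfl⟩
  have hlen : w.length = w'.length := le_antisymm l2 l1
  have hvlen : v.length = v'.length := by
    have := congrArg List.length he'
    rw [length_append, length_append] at this
    omega
  exact (List.append_inj he' hvlen).2

theorem std_cases {s : List X} {t : FreeMagma X} (h : IsStdBracketing s t) :
    (∃ x, s = [x] ∧ t = .of x) ∨
    ∃ v w tv tw, s = v ++ w ∧ t = tv * tw ∧ IsALSW (v ++ w) ∧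
      LongestALSWProperSuffix (v ++ w) w ∧ IsStdBracketing v tv ∧ IsStdBracketing w tw := by
  cases h with
  | of x => exact Or.inl ⟨x, rfl, rfl⟩
  | mul hA hL hv hw => exact Or.inr ⟨_, _, _, _, rfl, rfl, hA, hL, hv, hw⟩

theorem std_unique {s : List X} {t₁ t₂ : FreeMagma X}
    (h1 : IsStdBracketing s t₁) (h2 : IsStdBracketing s t₂) : t₁ = t₂ := by
  induction h1 generalizing t₂ with
  | of x =>
    rcases std_cases h2 with ⟨y, hy, rfl⟩ | ⟨v, w, tv, tw, hs, rfl, hA, hL, hv, hw⟩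
    · rw [show y = x by injection hy with h; exact h.symm]
    · have hv' : v.length ≠ 0 := fun h => std_ne_nil hv (length_eq_zero_iff.1 h)
      have hw' : w.length ≠ 0 := fun h => std_ne_nil hw (length_eq_zero_iff.1 h)
      have h := congrArg List.length hs
      rw [length_append] at h
      simp only [length_cons, length_nil] at h
      omega
  | mul hA hL hv hw ihv ihw =>
    rename_i v w tv tw
    rcases std_cases h2 with ⟨y, hy, rfl⟩ | ⟨v', w', tv', tw', hs, rfl, hA', hL', hv', hw'⟩
    · have hv2 : v.length ≠ 0 := fun h => std_ne_nil hv (length_eq_zero_iff.1 h)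
      have hw2 : w.length ≠ 0 := fun h => std_ne_nil hw (length_eq_zero_iff.1 h)
      have h := congrArg List.length hy
      rw [length_append] at h
      simp only [length_cons, length_nil] at h
      omega
    · have hww : w = w' := longest_eq hL (hs ▸ hL')
      subst hww
      have hlen : v.length = v'.length := by
        have := congrArg List.length hs
        rw [length_append, length_append] at this
        omega
      have hvv : v = v' := (List.append_inj hs hlen).1
      subst hvv
      rw [ihv hv', ihw hw']

end Magma

section Main
variable {X : Type*} [LinearOrder X]

theorem nlsw_cases {t : FreeMagma X} (h : IsNLSW t) :
    (∃ x, t = .of x) ∨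
    ∃ tv tw, t = tv * tw ∧ IsNLSW tv ∧ IsNLSW tw ∧ IsALSW (wordOf (tv * tw)) ∧
      ∀ t₁ t₂ : FreeMagma X, tv = t₁ * t₂ → LSLe (wordOf t₂) (wordOf tw) := by
  cases h with
  | of x => exact Or.inl ⟨x, rfl⟩
  | mul h1 h2 h3 h4 => exact Or.inr ⟨_, _, rfl, h1, h2, h3, h4⟩

theorem main_aux : ∀ n : ℕ, ∀ u : List X, u.length ≤ n → IsALSW u →
    (∃ t : FreeMagma X, IsNLSW t ∧ wordOf t = u ∧ IsStdBracketing u t) ∧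
    (∀ t : FreeMagma X, IsNLSW t → wordOf t = u → IsStdBracketing u t) := by
  intro n
  induction n with
  | zero =>
    intro u hl hu
    exact absurd (length_eq_zero_iff.1 (Nat.le_zero.1 hl)) hu.1
  | succ n ih =>
    intro u hl hu
    have hupos : 1 ≤ u.length :=
      Nat.pos_of_ne_zero fun h => hu.1 (length_eq_zero_iff.1 h)
    rcases eq_or_lt_of_le hupos with h1 | h2
    · -- single letter
      obtain ⟨x, rfl⟩ := List.length_eq_one_iff.1 h1.symm
      constructor
      · exact ⟨.of x, .of x, rfl, .of x⟩
      · intro t ht hwt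
        rcases nlsw_cases ht with ⟨y, rfl⟩ | ⟨tv, tw, rfl, hN1, hN2, hA', hcond⟩
        · have : y = x := by
            have : wordOf (FreeMagma.of y) = [y] := rfl
            rw [this] at hwt
            injection hwt
          subst this
          exact .of y
        · exfalso
          rw [wordOf_mul] at hwt
          have := congrArg List.length hwt
          rw [length_append] at this
          have l1 : (wordOf tv).length ≠ 0 := fun h => wordOf_ne_nil tv (length_eq_zero_iff.1 h)
          have l2 : (wordOf tw).length ≠ 0 := fun h => wordOf_ne_nil tw (length_eq_zero_iff.1 h)
          simp only [length_cons, length_nil] at this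
          omega
    · -- length at least 2
      obtain ⟨w, hw⟩ := longest_exists hu h2
      obtain ⟨hwA, ⟨v, hv, huvw⟩, hmax⟩ := id hw
      have hwne : w ≠ [] := hwA.1
      have hvA : IsALSW v := left_factor_alsw hu hw huvw hv
      have hlen : v.length + w.length = u.length := by
        rw [huvw, length_append]
      have hvpos : v.length ≠ 0 := fun h => hv (length_eq_zero_iff.1 h)
      have hwpos : w.length ≠ 0 := fun h => hwne (length_eq_zero_iff.1 h)
      obtain ⟨⟨tv, htvN, htvW, htvS⟩, hvuniq⟩ := ih v (by omega) hvA
      obtain ⟨⟨tw, htwN, htwW, htwS⟩, hwuniq⟩ := ih w (by omega) hwA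
      have hcond : ∀ t₁ t₂ : FreeMagma X, tv = t₁ * t₂ → LSLe (wordOf t₂) (wordOf tw) := by
        intro t₁ t₂ hsplit
        subst hsplit
        rcases std_cases htvS with ⟨x, hx, hof⟩ |
          ⟨v1, w1, tv1, tw1, hvs, hmm, hA1, hL1, hstd1, hstd2⟩
        · rw [← FreeMagma.mul_eq] at hof
          cases hof
        · rw [← FreeMagma.mul_eq, ← FreeMagma.mul_eq] at hmm
          injection hmm with e1 e2
          subst e1; subst e2
          have hw2 : wordOf t₂ = w1 := std_word hstd2
          rw [hw2, htwW]
          have hw1A : IsALSW w1 := hL1.1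
          rcases lslt_total w1 w with hlt | heqq | hgt
          · exact Or.inr hlt
          · exact Or.inl heqq
          · exfalso
            have hCC : IsALSW (w1 ++ w) := alsw_append_alsw hw1A hwA hgt
            have hsuf : u = v1 ++ (w1 ++ w) := by
              rw [huvw, hvs, append_assoc]
            have := hmax (w1 ++ w) hCC ⟨v1, std_ne_nil hstd1, hsuf⟩
            rw [length_append] at this
            have : w1.length ≠ 0 := fun h => (std_ne_nil hstd2) (length_eq_zero_iff.1 h)
            omega
      have hword : wordOf (tv * tw) = u := by
        rw [wordOf_mul, htvW, htwW, ← huvw]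
      have htN : IsNLSW (tv * tw) := .mul htvN htwN (hword ▸ hu) hcond
      have htS : IsStdBracketing u (tv * tw) := by
        rw [huvw]
        exact .mul (huvw ▸ hu) (huvw ▸ hw) htvS htwS
      refine ⟨⟨tv * tw, htN, hword, htS⟩, ?_⟩
      -- uniqueness
      intro t ht htw
      rcases nlsw_cases ht with ⟨x, rfl⟩ | ⟨tv', tw', rfl, hN1, hN2, hA', hcond2⟩
      · exfalso
        have : u.length = 1 := by
          rw [← htw]
          rfl
        omega
      · rw [wordOf_mul] at htw
        set v' := wordOf tv' with hv'def
        set w' := wordOf tw' with hw'def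
        have hv'ne : v' ≠ [] := wordOf_ne_nil tv'
        have hw'ne : w' ≠ [] := wordOf_ne_nil tw'
        have hv'pos : v'.length ≠ 0 := fun h => hv'ne (length_eq_zero_iff.1 h)
        have hw'pos : w'.length ≠ 0 := fun h => hw'ne (length_eq_zero_iff.1 h)
        have huv' : u = v' ++ w' := htw.symm
        have hlen' : v'.length + w'.length = u.length := by
          rw [huv', length_append]
        have hv'A : IsALSW v' := nlsw_alsw hN1
        have hw'A : IsALSW w' := nlsw_alsw hN2
        have hstd1 : IsStdBracketing v' tv' := (ih v' (by omega) hv'A).2 tv' hN1 rfl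
        have hstd2 : IsStdBracketing w' tw' := (ih w' (by omega) hw'A).2 tw' hN2 rfl
        have hwlen : w.length ≤ w'.length := by
          by_contra hlt
          push_neg at hlt
          obtain ⟨m, hmw, hv'm⟩ :=
            suffix_suffix (show v' ++ w' = v ++ w by rw [← huv', huvw]) hlt.le
          have hm' : m ≠ [] := by
            rintro rfl
            rw [nil_append] at hmw
            subst hmw
            exact absurd rfl hlt.ne
          -- m is a proper nonempty suffix of v'
          have hmle : LSLe m w' := by
            rcases std_cases hstd1 with ⟨x, hx, hof⟩ |
              ⟨v1, w1, t1, t2, hv's, hmm, hA1, hL1, h1, h2⟩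
            · -- v' = [x] impossible
              exfalso
              have := congrArg List.length hv'm
              rw [hx, length_append] at this
              simp only [length_cons, length_nil] at this
              have : m.length ≠ 0 := fun h => hm' (length_eq_zero_iff.1 h)
              omega
            · have hRle : LSLe m w1 :=
                suffix_le_longest hv'A (hv's ▸ hL1) m v hv hm' hv'm
              have hc := hcond2 t1 t2 hmm
              have hw1 : wordOf t2 = w1 := std_word h2
              rw [hw1] at hc
              exact lsle_trans hRle hc
          have hsw : SLt w' w := alsw_slt_suffix hwA m w' hm' hw'ne hmw
          rcases hmle with heqm | hltm
          · rw [heqm] at hmw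
            rw [hmw] at hsw
            exact slt_self_append w' w' hsw
          · rcases (lslt_iff m w').1 hltm with hsm | ⟨r, hr, hmr⟩
            · have h5 : SLt (m ++ w') (w' ++ m) := slt_append hsm w' m
              have h6 : LSLt (w' ++ m) (m ++ w') := hwA.2 m w' hm' hw'ne hmw
              exact lslt_asymm h6 (lslt_of_slt h5)
            · rw [hmw, hmr, append_assoc] at hsw
              exact slt_self_append w' (r ++ w') hsw
        have hw'le : w'.length ≤ w.length := hmax w' hw'A ⟨v', hv'ne, huv'⟩
        have hLong' : LongestALSWProperSuffix u w' :=
          ⟨hw'A, ⟨v', hv'ne, huv'⟩, fun w'' hA'' hS'' => (hmax w'' hA'' hS'').trans (by omega)⟩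
        rw [huv']
        exact .mul (huv' ▸ hu) (huv' ▸ hLong') hstd1 hstd2

end Main

/-- Every ALSW `u` admits a unique bracketing satisfying
Shirshov's NLSW conditions, and this bracketing is the standard one, given by
the factorization `[u] = [[v][w]]` with `w` the longest proper ALSW suffix. -/
theorem nlsw_exists_unique {X : Type*} [LinearOrder X]
    (u : List X) (hu : IsALSW u) :
    (∃! t : FreeMagma X, IsNLSW t ∧ wordOf t = u) ∧
      ∀ t : FreeMagma X, IsNLSW t → wordOf t = u → IsStdBracketing u t := by
  obtain ⟨⟨t, htN, htW, htS⟩, huniq⟩ := main_aux u.length u le_rfl hu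
  refine ⟨⟨t, ⟨htN, htW⟩, ?_⟩, huniq⟩
  rintro t' ⟨h1, h2⟩
  exact std_unique (huniq t' h1 h2) htS
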